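/- Let P ∈ ℂ[x] be a polynomial of degree n ≥ 1 and let T : 𝒜(P) → ℂ be a ℂ-linear map. Then T is a trace, i.e. T(ab) = T(ba) for all a, b ∈ 𝒜(P), if and only if the following two conditions hold: (1) T(a) = 0 for every a ∈ 𝒜(P) such that ha − ah = 2ka for some nonzero integer k; (2) T(S(h−1)·P(h−1)) = T(S(h+1)·P(h+1)) for every S ∈ ℂ[x]. Moreover, the ℂ-vector space of traces on 𝒜(P) has dimension n − 1; equivalently, the ℂ-linear subspace {S(x+1)P(x+1) − S(x−1)P(x−1) : S ∈ ℂ[x]} of ℂ[x] has codimension n − 1. -/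

import Mathlib

open Polynomial
open scoped Classical

noncomputable section

abbrev FA : Type := FreeAlgebra ℂ (Fin 3)

def Egen : FA := FreeAlgebra.ι ℂ 0
def Fgen : FA := FreeAlgebra.ι ℂ 1
def Hgen : FA := FreeAlgebra.ι ℂ 2

/-- The defining relations of the deformation `𝒜(P)` of the type A Kleinian singularity:
`he − eh = 2e`, `hf − fh = −2f`, `ef = P(h−1)`, `fe = P(h+1)`. -/
inductive ARel (P : ℂ[X]) : FA → FA → Prop
  | he : ARel P (Hgen * Egen - Egen * Hgen) (2 * Egen)
  | hf : ARel P (Hgen * Fgen - Fgen * Hgen) (-(2 * Fgen))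
  | ef : ARel P (Egen * Fgen) (Polynomial.aeval (Hgen - 1) P)
  | fe : ARel P (Fgen * Egen) (Polynomial.aeval (Hgen + 1) P)

/-- The algebra `𝒜(P)`. -/
abbrev AP (P : ℂ[X]) : Type := RingQuot (ARel P)

def eA (P : ℂ[X]) : AP P := RingQuot.mkAlgHom ℂ (ARel P) Egen
def fA (P : ℂ[X]) : AP P := RingQuot.mkAlgHom ℂ (ARel P) Fgen
def hA (P : ℂ[X]) : AP P := RingQuot.mkAlgHom ℂ (ARel P) Hgen

/-- `P` is real on the imaginary axis: `P(it) ∈ ℝ` for all real `t`. -/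
def RealOnIm (P : ℂ[X]) : Prop := ∀ t : ℝ, ∃ r : ℝ, P.eval (Complex.I * t) = r

/-- An invariant Hermitian (sesquilinear) form on the regular bimodule `𝒜(P)`. -/
structure InvForm (P : ℂ[X]) where
  B : AP P → AP P → ℂ
  add_left : ∀ u v w, B (u + v) w = B u w + B v w
  smul_left : ∀ (c : ℂ) (u v), B (c • u) v = c * B u v
  conj_symm : ∀ u v, B u v = starRingEnd ℂ (B v u)
  e_left : ∀ u v, B (eA P * u) v = - B u (v * fA P)
  h_left : ∀ u v, B (hA P * u) v = - B u (v * hA P)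
  f_left : ∀ u v, B (fA P * u) v = - B u (v * eA P)
  e_right : ∀ u v, B (u * eA P) v = - B u (fA P * v)
  h_right : ∀ u v, B (u * hA P) v = - B u (hA P * v)
  f_right : ∀ u v, B (u * fA P) v = - B u (eA P * v)

/-- The regular bimodule `𝒜(P)` is unitarizable: there is a positive definite
invariant Hermitian form on it. -/
def Unitarizable (P : ℂ[X]) : Prop :=
  ∃ Φ : InvForm P, ∀ u : AP P, u ≠ 0 → ∃ r : ℝ, 0 < r ∧ Φ.B u u = r


/-- The subspace of traces on `𝒜(P)` inside the dual space. -/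
def tracesSubmodule (P : ℂ[X]) : Submodule ℂ (AP P →ₗ[ℂ] ℂ) where
  carrier := {T | ∀ a b : AP P, T (a * b) = T (b * a)}
  add_mem' := by
    intro T T' hT hT' a b
    simp only [LinearMap.add_apply, hT a b, hT' a b]
  zero_mem' := by
    intro a b
    rfl
  smul_mem' := by
    intro c T hT a b
    simp only [LinearMap.smul_apply, hT a b]

/-- The linear map `S(x) ↦ S(x+1)P(x+1) − S(x−1)P(x−1)` on `ℂ[x]`. -/
def shiftMap (P : ℂ[X]) : ℂ[X] →ₗ[ℂ] ℂ[X] where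
  toFun S := (S * P).comp (X + 1) - (S * P).comp (X - 1)
  map_add' S T := by
    simp only [add_mul, Polynomial.add_comp]
    ring
  map_smul' c S := by
    simp only [smul_mul_assoc, Polynomial.smul_comp, RingHom.id_apply, smul_sub]

/-- a linear map `T : 𝒜(P) → ℂ` is a trace iff it kills all `ad h`-weight
vectors of nonzero weight and satisfies `T(S(h−1)P(h−1)) = T(S(h+1)P(h+1))` for all `S`;
moreover the space of traces has dimension `n − 1`, equivalently the subspace
`{S(x+1)P(x+1) − S(x−1)P(x−1)}` of `ℂ[x]` has codimension `n − 1`. -/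
lemma rel_he : hA P * eA P = eA P * hA P + 2 * eA P := by
  have := RingQuot.mkAlgHom_rel ℂ (ARel.he (P := P))
  simp only [map_sub, map_mul, map_ofNat] at this
  rw [eA, hA]
  exact sub_eq_iff_eq_add'.mp this

lemma rel_hf : hA P * fA P = fA P * hA P - 2 * fA P := by
  have := RingQuot.mkAlgHom_rel ℂ (ARel.hf (P := P))
  simp only [map_sub, map_mul, map_neg, map_ofNat] at this
  rw [fA, hA, sub_eq_add_neg]
  exact sub_eq_iff_eq_add'.mp this

lemma rel_ef : eA P * fA P = aeval (hA P - 1) P := by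
  have := RingQuot.mkAlgHom_rel ℂ (ARel.ef (P := P))
  rw [map_mul] at this
  rw [eA, fA, hA, this, ← Polynomial.aeval_algHom_apply]
  simp

lemma rel_fe : fA P * eA P = aeval (hA P + 1) P := by
  have := RingQuot.mkAlgHom_rel ℂ (ARel.fe (P := P))
  rw [map_mul] at this
  rw [eA, fA, hA, this, ← Polynomial.aeval_algHom_apply]
  simp


lemma pow_he (k : ℕ) : hA P ^ k * eA P = eA P * (hA P + 2) ^ k := by
  induction k with
  | zero => simp
  | succ m ih =>
    have c1 : Commute (hA P) ((hA P + 2) ^ m) :=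
      ((Commute.refl _).add_right (Commute.ofNat_right _ 2)).pow_right m
    calc hA P ^ (m+1) * eA P
        = hA P * (hA P ^ m * eA P) := by rw [pow_succ', mul_assoc]
      _ = hA P * eA P * (hA P + 2) ^ m := by rw [ih, mul_assoc]
      _ = (eA P * hA P + 2 * eA P) * (hA P + 2) ^ m := by rw [rel_he]
      _ = eA P * ((hA P + 2) ^ m * (hA P + 2)) := by
          rw [add_mul, mul_assoc, c1.eq, mul_add, mul_add]
          congr 1
          rw [(Commute.ofNat_left 2 _).eq, mul_assoc, (Commute.ofNat_left 2 _).eq]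
      _ = eA P * (hA P + 2) ^ (m+1) := by rw [pow_succ]

lemma pow_hf (k : ℕ) : hA P ^ k * fA P = fA P * (hA P - 2) ^ k := by
  induction k with
  | zero => simp
  | succ m ih =>
    have c1 : Commute (hA P) ((hA P - 2) ^ m) :=
      ((Commute.refl _).sub_right (Commute.ofNat_right _ 2)).pow_right m
    calc hA P ^ (m+1) * fA P
        = hA P * (hA P ^ m * fA P) := by rw [pow_succ', mul_assoc]
      _ = hA P * fA P * (hA P - 2) ^ m := by rw [ih, mul_assoc]
      _ = (fA P * hA P - 2 * fA P) * (hA P - 2) ^ m := by rw [rel_hf]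
      _ = fA P * ((hA P - 2) ^ m * (hA P - 2)) := by
          rw [sub_mul, mul_assoc, c1.eq, mul_sub, mul_sub]
          congr 1
          rw [(Commute.ofNat_left 2 _).eq, mul_assoc, (Commute.ofNat_left 2 _).eq]
      _ = fA P * (hA P - 2) ^ (m+1) := by rw [pow_succ]

lemma aeval_comp_shift (x : AP P) (c : ℂ) (q : ℂ[X]) :
    aeval x (q.comp (X + C c)) = aeval (x + algebraMap ℂ (AP P) c) q := by
  rw [Polynomial.aeval_comp]; simp

lemma h_comm_aeval (q : ℂ[X]) :
    hA P * aeval (hA P) q = aeval (hA P) q * hA P := by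
  have h1 : aeval (hA P) (X * q) = aeval (hA P) (q * X) := by rw [mul_comm]
  simpa [map_mul] using h1

lemma comm_e (q : ℂ[X]) :
    aeval (hA P) q * eA P = eA P * aeval (hA P + 2) q := by
  induction q using Polynomial.induction_on' with
  | add p q hp hq => simp only [map_add, add_mul, mul_add, hp, hq]
  | monomial n a =>
    simp only [Polynomial.aeval_monomial]
    rw [mul_assoc, pow_he, ← mul_assoc, Algebra.commutes, mul_assoc]

lemma comm_f (q : ℂ[X]) :
    aeval (hA P) q * fA P = fA P * aeval (hA P - 2) q := by
  induction q using Polynomial.induction_on' with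
  | add p q hp hq => simp only [map_add, add_mul, mul_add, hp, hq]
  | monomial n a =>
    simp only [Polynomial.aeval_monomial]
    rw [mul_assoc, pow_hf, ← mul_assoc, Algebra.commutes, mul_assoc]

lemma comm_e_pow (i : ℕ) (q : ℂ[X]) :
    aeval (hA P) q * eA P ^ i = eA P ^ i * aeval (hA P) (q.comp (X + C (2*(i:ℂ)))) := by
  induction i generalizing q with
  | zero => simp
  | succ m ih =>
    have h2 : aeval (hA P) q * eA P = eA P * aeval (hA P) (q.comp (X + C 2)) := by
      rw [comm_e, aeval_comp_shift, map_ofNat]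
    calc aeval (hA P) q * eA P ^ (m+1)
        = (aeval (hA P) q * eA P) * eA P ^ m := by rw [pow_succ', mul_assoc]
      _ = eA P * (aeval (hA P) (q.comp (X + C 2)) * eA P ^ m) := by rw [h2, mul_assoc]
      _ = eA P * (eA P ^ m * aeval (hA P) ((q.comp (X + C 2)).comp (X + C (2*(m:ℂ))))) := by
          rw [ih]
      _ = eA P ^ (m+1) * aeval (hA P) (q.comp (X + C (2*((m+1 : ℕ):ℂ)))) := by
          rw [← mul_assoc, ← pow_succ']
          congr 2
          rw [Polynomial.comp_assoc]
          congr 1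
          simp only [Polynomial.add_comp, Polynomial.X_comp, Polynomial.C_comp, add_assoc,
            ← Polynomial.C_add]
          push_cast
          congr 2
          ring

lemma comm_f_pow (i : ℕ) (q : ℂ[X]) :
    aeval (hA P) q * fA P ^ i = fA P ^ i * aeval (hA P) (q.comp (X - C (2*(i:ℂ)))) := by
  induction i generalizing q with
  | zero => simp
  | succ m ih =>
    have h2 : aeval (hA P) q * fA P = fA P * aeval (hA P) (q.comp (X - C 2)) := by
      rw [comm_f, Polynomial.aeval_comp]; simp [sub_eq_add_neg, map_ofNat]
    calc aeval (hA P) q * fA P ^ (m+1)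
        = (aeval (hA P) q * fA P) * fA P ^ m := by rw [pow_succ', mul_assoc]
      _ = fA P * (aeval (hA P) (q.comp (X - C 2)) * fA P ^ m) := by rw [h2, mul_assoc]
      _ = fA P * (fA P ^ m * aeval (hA P) ((q.comp (X - C 2)).comp (X - C (2*(m:ℂ))))) := by
          rw [ih]
      _ = fA P ^ (m+1) * aeval (hA P) (q.comp (X - C (2*((m+1 : ℕ):ℂ)))) := by
          rw [← mul_assoc, ← pow_succ']
          congr 2
          rw [Polynomial.comp_assoc]
          congr 1
          simp only [Polynomial.sub_comp, Polynomial.add_comp, Polynomial.X_comp, Polynomial.C_comp, sub_eq_add_neg,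
            ← Polynomial.C_neg, ← Polynomial.C_add, add_assoc]
          push_cast
          congr 2
          ring

lemma alg_central (c : ℂ) (x y : AP P) :
    x * (algebraMap ℂ (AP P) c * y) = c • (x * y) := by
  rw [Algebra.smul_def, ← mul_assoc, ← Algebra.commutes, mul_assoc]

lemma weight_e (i : ℕ) (q : ℂ[X]) :
    hA P * (eA P ^ i * aeval (hA P) q) - (eA P ^ i * aeval (hA P) q) * hA P
      = ((2 * (i:ℤ) : ℤ) : ℂ) • (eA P ^ i * aeval (hA P) q) := by
  have h1 : hA P * eA P ^ i = eA P ^ i * (hA P + algebraMap ℂ (AP P) (2*(i:ℂ))) := by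
    have h0 := comm_e_pow (P := P) i X
    rw [Polynomial.aeval_X, Polynomial.X_comp, map_add, Polynomial.aeval_X,
      Polynomial.aeval_C] at h0
    exact h0
  have key : hA P * (eA P ^ i * aeval (hA P) q) - (eA P ^ i * aeval (hA P) q) * hA P
      = eA P ^ i * (algebraMap ℂ (AP P) (2*(i:ℂ)) * aeval (hA P) q) := by
    rw [← mul_assoc (hA P), h1, mul_assoc, mul_assoc, ← mul_sub]
    congr 1
    rw [add_mul, ← h_comm_aeval, add_sub_cancel_left]
  rw [key, alg_central]
  congr 1
  push_cast
  ring

lemma weight_f (i : ℕ) (q : ℂ[X]) :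
    hA P * (fA P ^ i * aeval (hA P) q) - (fA P ^ i * aeval (hA P) q) * hA P
      = ((2 * (-(i:ℤ)) : ℤ) : ℂ) • (fA P ^ i * aeval (hA P) q) := by
  have h1 : hA P * fA P ^ i = fA P ^ i * (hA P - algebraMap ℂ (AP P) (2*(i:ℂ))) := by
    have h0 := comm_f_pow (P := P) i X
    rw [Polynomial.aeval_X, Polynomial.X_comp, map_sub, Polynomial.aeval_X,
      Polynomial.aeval_C] at h0
    exact h0
  have key : hA P * (fA P ^ i * aeval (hA P) q) - (fA P ^ i * aeval (hA P) q) * hA P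
      = fA P ^ i * (algebraMap ℂ (AP P) (-(2*(i:ℂ))) * aeval (hA P) q) := by
    rw [← mul_assoc (hA P), h1, mul_assoc, mul_assoc, ← mul_sub]
    congr 1
    rw [sub_mul, ← h_comm_aeval, sub_sub_cancel_left, map_neg]
    exact (neg_mul _ _).symm
  rw [key, alg_central]
  congr 1
  push_cast
  ring

lemma h_epow (i : ℕ) : hA P * eA P ^ i = eA P ^ i * (hA P + algebraMap ℂ (AP P) (2*(i:ℂ))) := by
  have h0 := comm_e_pow (P := P) i X
  rw [Polynomial.aeval_X, Polynomial.X_comp, map_add, Polynomial.aeval_X,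
    Polynomial.aeval_C] at h0
  exact h0

lemma h_fpow (i : ℕ) : hA P * fA P ^ i = fA P ^ i * (hA P - algebraMap ℂ (AP P) (2*(i:ℂ))) := by
  have h0 := comm_f_pow (P := P) i X
  rw [Polynomial.aeval_X, Polynomial.X_comp, map_sub, Polynomial.aeval_X,
    Polynomial.aeval_C] at h0
  exact h0

lemma aeval_mul_epow (r q : ℂ[X]) (i : ℕ) :
    aeval (hA P) r * (eA P ^ i * aeval (hA P) q)
      = eA P ^ i * aeval (hA P) (r.comp (X + C (2*(i:ℂ))) * q) := by
  rw [← mul_assoc, comm_e_pow, mul_assoc, ← map_mul]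

lemma aeval_mul_fpow (r q : ℂ[X]) (i : ℕ) :
    aeval (hA P) r * (fA P ^ i * aeval (hA P) q)
      = fA P ^ i * aeval (hA P) (r.comp (X - C (2*(i:ℂ))) * q) := by
  rw [← mul_assoc, comm_f_pow, mul_assoc, ← map_mul]

lemma h_mul_epow (q : ℂ[X]) (i : ℕ) :
    hA P * (eA P ^ i * aeval (hA P) q)
      = eA P ^ i * aeval (hA P) ((X + C (2*(i:ℂ))) * q) := by
  have := aeval_mul_epow (P := P) X q i
  rw [Polynomial.aeval_X, Polynomial.X_comp] at this
  exact this

lemma h_mul_fpow (q : ℂ[X]) (i : ℕ) :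
    hA P * (fA P ^ i * aeval (hA P) q)
      = fA P ^ i * aeval (hA P) ((X - C (2*(i:ℂ))) * q) := by
  have := aeval_mul_fpow (P := P) X q i
  rw [Polynomial.aeval_X, Polynomial.X_comp] at this
  exact this

/-- The spanning set of `𝒜(P)`: elements `e^i q(h)` and `f^i q(h)`. -/
def sSet (P : ℂ[X]) : Set (AP P) :=
  {x | ∃ (i : ℕ) (q : ℂ[X]),
    x = eA P ^ i * aeval (hA P) q ∨ x = fA P ^ i * aeval (hA P) q}

lemma e_mul_sSet {m : AP P} (hm : m ∈ sSet P) : eA P * m ∈ sSet P := by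
  obtain ⟨i, q, h | h⟩ := hm
  · exact ⟨i+1, q, Or.inl (by rw [h, ← mul_assoc, ← pow_succ'])⟩
  · cases i with
    | zero =>
      exact ⟨1, q, Or.inl (by rw [h, pow_zero, one_mul, pow_one])⟩
    | succ i' =>
      refine ⟨i', (P.comp (X - C 1)).comp (X - C (2*(i':ℂ))) * q, Or.inr ?_⟩
      rw [h, pow_succ', ← mul_assoc, ← mul_assoc, rel_ef, mul_assoc]
      rw [show aeval (hA P - 1) P = aeval (hA P) (P.comp (X - C 1)) by
        rw [Polynomial.aeval_comp]; simp]
      exact aeval_mul_fpow _ _ _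

lemma f_mul_sSet {m : AP P} (hm : m ∈ sSet P) : fA P * m ∈ sSet P := by
  obtain ⟨i, q, h | h⟩ := hm
  case inr => exact ⟨i+1, q, Or.inr (by rw [h, ← mul_assoc, ← pow_succ'])⟩
  case inl =>
    cases i with
    | zero =>
      exact ⟨1, q, Or.inr (by rw [h, pow_zero, one_mul, pow_one])⟩
    | succ i' =>
      refine ⟨i', (P.comp (X + C 1)).comp (X + C (2*(i':ℂ))) * q, Or.inl ?_⟩
      rw [h, pow_succ', ← mul_assoc, ← mul_assoc, rel_fe, mul_assoc]
      rw [show aeval (hA P + 1) P = aeval (hA P) (P.comp (X + C 1)) by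
        rw [Polynomial.aeval_comp]; simp]
      exact aeval_mul_epow _ _ _

lemma h_mul_sSet {m : AP P} (hm : m ∈ sSet P) : hA P * m ∈ sSet P := by
  obtain ⟨i, q, h | h⟩ := hm
  · exact ⟨i, (X + C (2*(i:ℂ))) * q, Or.inl (by rw [h, h_mul_epow])⟩
  · exact ⟨i, (X - C (2*(i:ℂ))) * q, Or.inr (by rw [h, h_mul_fpow])⟩

lemma one_mem_sSet : (1 : AP P) ∈ sSet P :=
  ⟨0, 1, Or.inl (by simp)⟩

/-- The set of elements whose left multiplication preserves the span of `sSet`. -/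
def leftStab (P : ℂ[X]) : Subalgebra ℂ (AP P) where
  carrier := {a | ∀ m ∈ Submodule.span ℂ (sSet P), a * m ∈ Submodule.span ℂ (sSet P)}
  mul_mem' := by
    intro a b ha hb m hm
    rw [mul_assoc]
    exact ha _ (hb _ hm)
  add_mem' := by
    intro a b ha hb m hm
    rw [add_mul]
    exact Submodule.add_mem _ (ha _ hm) (hb _ hm)
  algebraMap_mem' := by
    intro c m hm
    rw [← Algebra.smul_def]
    exact Submodule.smul_mem _ _ hm

lemma gen_mem_leftStab {x : AP P}
    (hx : ∀ m ∈ sSet P, x * m ∈ sSet P) : x ∈ leftStab P := by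
  intro m hm
  induction hm using Submodule.span_induction with
  | mem y hy => exact Submodule.subset_span (hx y hy)
  | zero => rw [mul_zero]; exact Submodule.zero_mem _
  | add y z _ _ hy hz => rw [mul_add]; exact Submodule.add_mem _ hy hz
  | smul c y _ hy => rw [mul_smul_comm]; exact Submodule.smul_mem _ _ hy

lemma adjoin_gens_eq_top :
    Algebra.adjoin ℂ ({eA P, fA P, hA P} : Set (AP P)) = ⊤ := by
  rw [eq_top_iff]
  rintro a -
  obtain ⟨x, rfl⟩ := RingQuot.mkAlgHom_surjective ℂ (ARel P) a
  have hx : x ∈ Algebra.adjoin ℂ (Set.range (FreeAlgebra.ι ℂ (X := Fin 3))) := by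
    rw [FreeAlgebra.adjoin_range_ι]; trivial
  have hmap : RingQuot.mkAlgHom ℂ (ARel P) x ∈
      (Algebra.adjoin ℂ (Set.range (FreeAlgebra.ι ℂ (X := Fin 3)))).map
        (RingQuot.mkAlgHom ℂ (ARel P)) :=
    Subalgebra.mem_map.mpr ⟨x, hx, rfl⟩
  rw [← Algebra.adjoin_image] at hmap
  refine Algebra.adjoin_mono ?_ hmap
  rintro y ⟨z, ⟨j, rfl⟩, rfl⟩
  fin_cases j
  · exact Or.inl rfl
  · exact Or.inr (Or.inl rfl)
  · exact Or.inr (Or.inr rfl)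

lemma span_sSet_eq_top : Submodule.span ℂ (sSet P) = ⊤ := by
  rw [eq_top_iff]
  rintro a -
  have ha : a ∈ leftStab P := by
    have hle : Algebra.adjoin ℂ ({eA P, fA P, hA P} : Set (AP P)) ≤ leftStab P := by
      apply Algebra.adjoin_le
      rintro x (rfl | rfl | rfl)
      · exact gen_mem_leftStab fun m hm => e_mul_sSet hm
      · exact gen_mem_leftStab fun m hm => f_mul_sSet hm
      · exact gen_mem_leftStab fun m hm => h_mul_sSet hm
    exact hle (by rw [adjoin_gens_eq_top]; trivial)
  simpa using ha 1 (Submodule.subset_span one_mem_sSet)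

lemma aeval_comp_shift' (x : AP P) (c : ℂ) (q : ℂ[X]) :
    aeval x (q.comp (X - C c)) = aeval (x - algebraMap ℂ (AP P) c) q := by
  rw [Polynomial.aeval_comp]; simp

lemma comm_e_comp (q : ℂ[X]) :
    aeval (hA P) q * eA P = eA P * aeval (hA P) (q.comp (X + C 2)) := by
  rw [comm_e, aeval_comp_shift, map_ofNat]

lemma comm_f_comp (q : ℂ[X]) :
    aeval (hA P) q * fA P = fA P * aeval (hA P) (q.comp (X - C 2)) := by
  rw [comm_f, aeval_comp_shift', map_ofNat]

lemma rel_ef' : eA P * fA P = aeval (hA P) (P.comp (X - C 1)) := by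
  rw [rel_ef, aeval_comp_shift']; simp

lemma rel_fe' : fA P * eA P = aeval (hA P) (P.comp (X + C 1)) := by
  rw [rel_fe, aeval_comp_shift]; simp

lemma trace_of_conditions (T : AP P →ₗ[ℂ] ℂ)
    (hE : ∀ (i : ℕ) (q : ℂ[X]), i ≠ 0 → T (eA P ^ i * aeval (hA P) q) = 0)
    (hF : ∀ (i : ℕ) (q : ℂ[X]), i ≠ 0 → T (fA P ^ i * aeval (hA P) q) = 0)
    (hS : ∀ S : ℂ[X], T (aeval (hA P) ((S * P).comp (X - C 1)))
        = T (aeval (hA P) ((S * P).comp (X + C 1)))) :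
    ∀ a b : AP P, T (a * b) = T (b * a) := by
  -- generator-level trace identities on the spanning set
  have key_e : ∀ m ∈ sSet P, T (eA P * m) = T (m * eA P) := by
    rintro m ⟨i, q, rfl | rfl⟩
    · have L : eA P * (eA P ^ i * aeval (hA P) q) = eA P ^ (i+1) * aeval (hA P) q := by
        rw [← mul_assoc, ← pow_succ']
      have R : (eA P ^ i * aeval (hA P) q) * eA P
          = eA P ^ (i+1) * aeval (hA P) (q.comp (X + C 2)) := by
        rw [mul_assoc, comm_e_comp, ← mul_assoc, ← pow_succ]
      rw [L, R, hE _ _ (Nat.succ_ne_zero i), hE _ _ (Nat.succ_ne_zero i)]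
    · cases i with
      | zero =>
        have L : eA P * (fA P ^ 0 * aeval (hA P) q) = eA P ^ 1 * aeval (hA P) q := by
          rw [pow_zero, one_mul, pow_one]
        have R : (fA P ^ 0 * aeval (hA P) q) * eA P
            = eA P ^ 1 * aeval (hA P) (q.comp (X + C 2)) := by
          rw [pow_zero, one_mul, comm_e_comp, pow_one]
        rw [L, R, hE _ _ one_ne_zero, hE _ _ one_ne_zero]
      | succ i' =>
        have L : eA P * (fA P ^ (i'+1) * aeval (hA P) q)
            = fA P ^ i' * aeval (hA P)
                ((P.comp (X - C 1)).comp (X - C (2*(i':ℂ))) * q) := by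
          rw [pow_succ', ← mul_assoc, ← mul_assoc, rel_ef', mul_assoc, aeval_mul_fpow]
        have R : (fA P ^ (i'+1) * aeval (hA P) q) * eA P
            = fA P ^ i' * aeval (hA P)
                (P.comp (X + C 1) * q.comp (X + C 2)) := by
          rw [mul_assoc, comm_e_comp, pow_succ, mul_assoc, ← mul_assoc (fA P), rel_fe',
            ← map_mul]
        rw [L, R]
        cases i' with
        | zero =>
          have := hS (q.comp (X + C 1))
          rw [show (q.comp (X + C 1) * P).comp (X - C 1)
              = (P.comp (X - C 1)).comp (X - C (2*((0:ℕ):ℂ))) * q by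
            simp [Polynomial.mul_comp, Polynomial.comp_assoc, Polynomial.add_comp,
              Polynomial.sub_comp, Polynomial.X_comp, Polynomial.C_comp, sub_add_cancel]
            ring] at this
          rw [show (q.comp (X + C 1) * P).comp (X + C 1)
              = P.comp (X + C 1) * q.comp (X + C 2) by
            simp [Polynomial.mul_comp, Polynomial.comp_assoc, Polynomial.add_comp,
              Polynomial.X_comp, Polynomial.C_comp]
            rw [show (C 2 : ℂ[X]) = 1 + 1 by
              rw [show (2:ℂ) = 1+1 by norm_num, Polynomial.C_add, Polynomial.C_1]]
            ring] at this
          simpa using this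
        | succ j =>
          rw [hF _ _ (Nat.succ_ne_zero j), hF _ _ (Nat.succ_ne_zero j)]
  have key_f : ∀ m ∈ sSet P, T (fA P * m) = T (m * fA P) := by
    rintro m ⟨i, q, rfl | rfl⟩
    case inr =>
      have L : fA P * (fA P ^ i * aeval (hA P) q) = fA P ^ (i+1) * aeval (hA P) q := by
        rw [← mul_assoc, ← pow_succ']
      have R : (fA P ^ i * aeval (hA P) q) * fA P
          = fA P ^ (i+1) * aeval (hA P) (q.comp (X - C 2)) := by
        rw [mul_assoc, comm_f_comp, ← mul_assoc, ← pow_succ]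
      rw [L, R, hF _ _ (Nat.succ_ne_zero i), hF _ _ (Nat.succ_ne_zero i)]
    case inl =>
      cases i with
      | zero =>
        have L : fA P * (eA P ^ 0 * aeval (hA P) q) = fA P ^ 1 * aeval (hA P) q := by
          rw [pow_zero, one_mul, pow_one]
        have R : (eA P ^ 0 * aeval (hA P) q) * fA P
            = fA P ^ 1 * aeval (hA P) (q.comp (X - C 2)) := by
          rw [pow_zero, one_mul, comm_f_comp, pow_one]
        rw [L, R, hF _ _ one_ne_zero, hF _ _ one_ne_zero]
      | succ i' =>
        have L : fA P * (eA P ^ (i'+1) * aeval (hA P) q)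
            = eA P ^ i' * aeval (hA P)
                ((P.comp (X + C 1)).comp (X + C (2*(i':ℂ))) * q) := by
          rw [pow_succ', ← mul_assoc, ← mul_assoc, rel_fe', mul_assoc, aeval_mul_epow]
        have R : (eA P ^ (i'+1) * aeval (hA P) q) * fA P
            = eA P ^ i' * aeval (hA P)
                (P.comp (X - C 1) * q.comp (X - C 2)) := by
          rw [mul_assoc, comm_f_comp, pow_succ, mul_assoc, ← mul_assoc (eA P), rel_ef',
            ← map_mul]
        rw [L, R]
        cases i' with
        | zero =>
          have := (hS (q.comp (X - C 1))).symm
          rw [show (q.comp (X - C 1) * P).comp (X + C 1)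
              = (P.comp (X + C 1)).comp (X + C (2*((0:ℕ):ℂ))) * q by
            simp [Polynomial.mul_comp, Polynomial.comp_assoc, Polynomial.add_comp,
              Polynomial.sub_comp, Polynomial.X_comp, Polynomial.C_comp, sub_add_cancel]
            ring] at this
          rw [show (q.comp (X - C 1) * P).comp (X - C 1)
              = P.comp (X - C 1) * q.comp (X - C 2) by
            simp [Polynomial.mul_comp, Polynomial.comp_assoc, Polynomial.sub_comp,
              Polynomial.X_comp, Polynomial.C_comp]
            rw [show (C 2 : ℂ[X]) = 1 + 1 by
              rw [show (2:ℂ) = 1+1 by norm_num, Polynomial.C_add, Polynomial.C_1]]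
            ring] at this
          simpa using this
        | succ j =>
          rw [hE _ _ (Nat.succ_ne_zero j), hE _ _ (Nat.succ_ne_zero j)]
  have key_h : ∀ m ∈ sSet P, T (hA P * m) = T (m * hA P) := by
    rintro m ⟨i, q, rfl | rfl⟩
    · cases i with
      | zero => rw [pow_zero, one_mul, h_comm_aeval]
      | succ i' =>
        have w := weight_e (P := P) (i'+1) q
        have hz := hE (i'+1) q (Nat.succ_ne_zero i')
        have hd : T (hA P * (eA P ^ (i'+1) * aeval (hA P) q))
            - T ((eA P ^ (i'+1) * aeval (hA P) q) * hA P)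
            = ((2 * ((i'+1 : ℕ):ℤ) : ℤ) : ℂ) * T (eA P ^ (i'+1) * aeval (hA P) q) := by
          rw [← map_sub, w, map_smul, smul_eq_mul]
        rw [hz, mul_zero] at hd
        exact sub_eq_zero.mp hd
    · cases i with
      | zero => rw [pow_zero, one_mul, h_comm_aeval]
      | succ i' =>
        have w := weight_f (P := P) (i'+1) q
        have hz := hF (i'+1) q (Nat.succ_ne_zero i')
        have hd : T (hA P * (fA P ^ (i'+1) * aeval (hA P) q))
            - T ((fA P ^ (i'+1) * aeval (hA P) q) * hA P)
            = ((2 * (-((i'+1 : ℕ):ℤ)) : ℤ) : ℂ) * T (fA P ^ (i'+1) * aeval (hA P) q) := by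
          rw [← map_sub, w, map_smul, smul_eq_mul]
        rw [hz, mul_zero] at hd
        exact sub_eq_zero.mp hd
  have mem_top : ∀ a : AP P, a ∈ Submodule.span ℂ (sSet P) := by
    intro a; rw [span_sSet_eq_top]; trivial
  have all_gen : ∀ (x : AP P), (∀ m ∈ sSet P, T (x * m) = T (m * x)) →
      ∀ a, T (x * a) = T (a * x) := by
    intro x hx a
    induction mem_top a using Submodule.span_induction with
    | mem m hm => exact hx m hm
    | zero => simp
    | add y z _ _ hy hz => simp only [mul_add, add_mul, map_add, hy, hz]
    | smul c y _ hy => simp only [mul_smul_comm, smul_mul_assoc, map_smul, hy]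
  let Csub : Subalgebra ℂ (AP P) :=
    { carrier := {b | ∀ a, T (a * b) = T (b * a)}
      mul_mem' := by
        intro b₁ b₂ h₁ h₂ a
        calc T (a * (b₁ * b₂)) = T ((a * b₁) * b₂) := by rw [mul_assoc]
          _ = T (b₂ * (a * b₁)) := h₂ _
          _ = T ((b₂ * a) * b₁) := by rw [mul_assoc]
          _ = T (b₁ * (b₂ * a)) := h₁ _
          _ = T ((b₁ * b₂) * a) := by rw [mul_assoc]
      add_mem' := by
        intro b₁ b₂ h₁ h₂ a
        simp only [mul_add, add_mul, map_add, h₁ a, h₂ a]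
      algebraMap_mem' := by
        intro c a
        rw [← Algebra.commutes] }
  intro a b
  have hb : b ∈ Csub := by
    have hle : Algebra.adjoin ℂ ({eA P, fA P, hA P} : Set (AP P)) ≤ Csub := by
      apply Algebra.adjoin_le
      rintro x (rfl | rfl | rfl)
      · exact fun a => (all_gen _ key_e a).symm
      · exact fun a => (all_gen _ key_f a).symm
      · exact fun a => (all_gen _ key_h a).symm
    exact hle (by rw [adjoin_gens_eq_top]; trivial)
  exact hb a

/-! ### A representation of `𝒜(P)` on `ℤ → ℂ[X]` -/

lemma gshift {A : Type} [Ring A] [Algebra ℂ A] (x : A) (c : ℂ) (q : ℂ[X]) :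
    aeval x (q.comp (X + C c)) = aeval (x + algebraMap ℂ A c) q := by
  rw [Polynomial.aeval_comp]; simp

lemma gshift' {A : Type} [Ring A] [Algebra ℂ A] (x : A) (c : ℂ) (q : ℂ[X]) :
    aeval x (q.comp (X - C c)) = aeval (x - algebraMap ℂ A c) q := by
  rw [Polynomial.aeval_comp]; simp

abbrev VV : Type := ℤ → ℂ[X]

def HV : Module.End ℂ VV where
  toFun v := fun j => (X + C (2*(j:ℂ))) * v j
  map_add' u v := by funext j; simp [mul_add]
  map_smul' c v := by funext j; simp [mul_smul_comm]

def EV : Module.End ℂ VV where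
  toFun v := fun j => v (j - 1)
  map_add' u v := rfl
  map_smul' c v := rfl

def FV (P : ℂ[X]) : Module.End ℂ VV where
  toFun v := fun j => P.comp (X + C (2*(j:ℂ)+1)) * v (j+1)
  map_add' u v := by funext j; simp [mul_add]
  map_smul' c v := by funext j; simp [mul_smul_comm]

lemma HV_apply (v : VV) (j : ℤ) : HV v j = (X + C (2*(j:ℂ))) * v j := rfl
lemma EV_apply (v : VV) (j : ℤ) : EV v j = v (j - 1) := rfl
lemma FV_apply (P : ℂ[X]) (v : VV) (j : ℤ) :
    FV P v j = P.comp (X + C (2*(j:ℂ)+1)) * v (j+1) := rfl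

lemma HV_pow_apply (n : ℕ) (v : VV) (j : ℤ) :
    (HV ^ n) v j = (X + C (2*(j:ℂ)))^n * v j := by
  induction n with
  | zero => simp
  | succ m ih =>
    rw [pow_succ', Module.End.mul_apply, HV_apply, ih, pow_succ']
    ring

lemma aeval_HV_apply (q : ℂ[X]) (v : VV) (j : ℤ) :
    (aeval HV q) v j = q.comp (X + C (2*(j:ℂ))) * v j := by
  induction q using Polynomial.induction_on' with
  | add p q hp hq =>
    rw [map_add, Polynomial.add_comp, LinearMap.add_apply, Pi.add_apply, hp, hq, add_mul]
  | monomial n a =>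
    rw [Polynomial.aeval_monomial, Module.End.mul_apply, Module.algebraMap_end_apply,
      Pi.smul_apply, HV_pow_apply]
    rw [show ((Polynomial.monomial n) a).comp (X + C (2*(j:ℂ)))
        = C a * (X + C (2*(j:ℂ)))^n by
      rw [← Polynomial.C_mul_X_pow_eq_monomial, Polynomial.mul_comp, Polynomial.C_comp,
        Polynomial.pow_comp, Polynomial.X_comp]]
    rw [Polynomial.smul_eq_C_mul]
    ring

lemma EV_pow_apply (n : ℕ) (v : VV) (j : ℤ) :
    (EV ^ n) v j = v (j - n) := by
  induction n generalizing v j with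
  | zero => simp
  | succ m ih =>
    rw [pow_succ, Module.End.mul_apply, ih, EV_apply]
    congr 1
    push_cast
    ring

lemma FV_pow_apply (P : ℂ[X]) (n : ℕ) (j : ℤ) :
    ∃ c : ℂ[X], ∀ v : VV, ((FV P) ^ n) v j = c * v (j + n) := by
  induction n generalizing j with
  | zero => exact ⟨1, fun v => by simp⟩
  | succ m ih =>
    obtain ⟨c, hc⟩ := ih j
    refine ⟨c * P.comp (X + C (2*((j+m:ℤ):ℂ)+1)), fun v => ?_⟩
    rw [pow_succ, Module.End.mul_apply, hc, FV_apply, mul_assoc]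
    congr 2
    push_cast
    ring

lemma C2 : (C 2 : ℂ[X]) = 2 := map_ofNat C 2

lemma rel_he_V (P : ℂ[X]) : HV * EV - EV * HV = 2 * EV := by
  rw [two_mul]
  apply LinearMap.ext; intro v; funext j
  simp only [LinearMap.sub_apply, LinearMap.add_apply, Module.End.mul_apply,
    Pi.sub_apply, Pi.add_apply, HV_apply, EV_apply]
  push_cast
  simp only [Polynomial.C_add, Polynomial.C_sub, Polynomial.C_mul, Polynomial.C_1, C2]
  ring

lemma rel_hf_V (P : ℂ[X]) : HV * FV P - FV P * HV = -(2 * FV P) := by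
  rw [two_mul]
  apply LinearMap.ext; intro v; funext j
  simp only [LinearMap.sub_apply, LinearMap.add_apply, LinearMap.neg_apply,
    Module.End.mul_apply, Pi.sub_apply, Pi.add_apply, Pi.neg_apply, HV_apply, FV_apply]
  push_cast
  simp only [Polynomial.C_add, Polynomial.C_sub, Polynomial.C_mul, Polynomial.C_1, C2]
  ring

lemma rel_ef_V (P : ℂ[X]) : EV * FV P = aeval (HV - 1) P := by
  have h1 : aeval (HV - 1) P = aeval HV (P.comp (X - C 1)) := by
    rw [gshift']; simp
  rw [h1]
  apply LinearMap.ext; intro v; funext j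
  rw [Module.End.mul_apply, EV_apply, FV_apply, aeval_HV_apply, Polynomial.comp_assoc,
    show (j - 1 + 1 : ℤ) = j by ring]
  congr 2
  rw [Polynomial.sub_comp, Polynomial.X_comp, Polynomial.C_comp, add_sub_assoc,
    ← Polynomial.C_sub]
  congr 1
  push_cast
  ring

lemma rel_fe_V (P : ℂ[X]) : FV P * EV = aeval (HV + 1) P := by
  have h1 : aeval (HV + 1) P = aeval HV (P.comp (X + C 1)) := by
    rw [gshift]; simp
  rw [h1]
  apply LinearMap.ext; intro v; funext j
  rw [Module.End.mul_apply, FV_apply, EV_apply, aeval_HV_apply, Polynomial.comp_assoc,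
    show (j + 1 - 1 : ℤ) = j by ring]
  congr 2
  rw [Polynomial.add_comp, Polynomial.X_comp, Polynomial.C_comp, add_assoc,
    ← Polynomial.C_add]

/-- The representation of `𝒜(P)` on `ℤ → ℂ[X]`. -/
def rep (P : ℂ[X]) : AP P →ₐ[ℂ] Module.End ℂ VV :=
  RingQuot.liftAlgHom ℂ ⟨FreeAlgebra.lift ℂ ![EV, FV P, HV], by
    have hFE : FreeAlgebra.lift ℂ ![EV, FV P, HV] Egen = EV := by
      rw [Egen, FreeAlgebra.lift_ι_apply]; rfl
    have hFF : FreeAlgebra.lift ℂ ![EV, FV P, HV] Fgen = FV P := by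
      rw [Fgen, FreeAlgebra.lift_ι_apply]; rfl
    have hFH : FreeAlgebra.lift ℂ ![EV, FV P, HV] Hgen = HV := by
      rw [Hgen, FreeAlgebra.lift_ι_apply]; rfl
    intro x y r
    cases r with
    | he =>
      simp only [map_sub, map_mul, map_ofNat, hFE, hFH]
      exact rel_he_V P
    | hf =>
      simp only [map_sub, map_mul, map_neg, map_ofNat, hFF, hFH]
      exact rel_hf_V P
    | ef =>
      simp only [map_mul, hFE, hFF]
      rw [← Polynomial.aeval_algHom_apply, map_sub, map_one, hFH]
      exact rel_ef_V P
    | fe =>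
      simp only [map_mul, hFE, hFF]
      rw [← Polynomial.aeval_algHom_apply, map_add, map_one, hFH]
      exact rel_fe_V P⟩

lemma rep_e (P : ℂ[X]) : rep P (eA P) = EV := by
  rw [eA, rep, RingQuot.liftAlgHom_mkAlgHom_apply, Egen, FreeAlgebra.lift_ι_apply]; rfl

lemma rep_f (P : ℂ[X]) : rep P (fA P) = FV P := by
  rw [fA, rep, RingQuot.liftAlgHom_mkAlgHom_apply, Fgen, FreeAlgebra.lift_ι_apply]; rfl

lemma rep_h (P : ℂ[X]) : rep P (hA P) = HV := by
  rw [hA, rep, RingQuot.liftAlgHom_mkAlgHom_apply, Hgen, FreeAlgebra.lift_ι_apply]; rfl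

def delta0 : VV := fun j => if j = 0 then 1 else 0

def ev0 : Module.End ℂ VV →ₗ[ℂ] ℂ[X] where
  toFun A := A delta0 0
  map_add' A B := rfl
  map_smul' c A := rfl

def Tphi (P : ℂ[X]) (φ : ℂ[X] →ₗ[ℂ] ℂ) : AP P →ₗ[ℂ] ℂ :=
  φ ∘ₗ ev0 ∘ₗ (rep P).toLinearMap

lemma Tphi_apply (φ : ℂ[X] →ₗ[ℂ] ℂ) (a : AP P) :
    Tphi P φ a = φ (ev0 (rep P a)) := rfl

lemma Tphi_aeval (φ : ℂ[X] →ₗ[ℂ] ℂ) (S : ℂ[X]) :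
    Tphi P φ (aeval (hA P) S) = φ S := by
  rw [Tphi_apply, ← Polynomial.aeval_algHom_apply, rep_h]
  congr 1
  show (aeval HV S) delta0 0 = S
  rw [aeval_HV_apply]
  simp [delta0]

lemma Tphi_epow (φ : ℂ[X] →ₗ[ℂ] ℂ) (i : ℕ) (q : ℂ[X]) (hi : i ≠ 0) :
    Tphi P φ (eA P ^ i * aeval (hA P) q) = 0 := by
  rw [Tphi_apply, map_mul, map_pow, rep_e, ← Polynomial.aeval_algHom_apply, rep_h]
  have hz : ev0 (EV ^ i * aeval HV q) = 0 := by
    show (EV ^ i) ((aeval HV q) delta0) 0 = 0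
    rw [EV_pow_apply, aeval_HV_apply]
    have hd : delta0 ((0:ℤ) - i) = 0 := by
      have h0 : ((0:ℤ) - i) ≠ 0 := by
        simpa using hi
      simp only [delta0, if_neg h0]
    rw [hd, mul_zero]
  rw [hz, map_zero]

lemma Tphi_fpow (φ : ℂ[X] →ₗ[ℂ] ℂ) (i : ℕ) (q : ℂ[X]) (hi : i ≠ 0) :
    Tphi P φ (fA P ^ i * aeval (hA P) q) = 0 := by
  rw [Tphi_apply, map_mul, map_pow, rep_f, ← Polynomial.aeval_algHom_apply, rep_h]
  have hz : ev0 (FV P ^ i * aeval HV q) = 0 := by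
    show (FV P ^ i) ((aeval HV q) delta0) 0 = 0
    obtain ⟨c, hc⟩ := FV_pow_apply P i 0
    rw [hc, aeval_HV_apply]
    have hd : delta0 ((0:ℤ) + i) = 0 := by
      have h0 : ((0:ℤ) + i) ≠ 0 := by
        simpa using hi
      simp only [delta0, if_neg h0]
    rw [hd, mul_zero, mul_zero]
  rw [hz, map_zero]

lemma Tphi_trace (φ : ℂ[X] →ₗ[ℂ] ℂ) (hφ : ∀ S, φ (shiftMap P S) = 0) :
    ∀ a b : AP P, Tphi P φ (a * b) = Tphi P φ (b * a) := by
  apply trace_of_conditions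
  · exact fun i q hi => Tphi_epow φ i q hi
  · exact fun i q hi => Tphi_fpow φ i q hi
  · intro S
    rw [Tphi_aeval, Tphi_aeval]
    have h1 := hφ S
    rw [show shiftMap P S = (S * P).comp (X + 1) - (S * P).comp (X - 1) from rfl,
      map_sub, sub_eq_zero] at h1
    rw [Polynomial.C_1, show ((1:ℂ[X]) : ℂ[X]) = 1 from rfl]
    exact h1.symm

lemma aeval_sub_one (Q : ℂ[X]) :
    aeval (hA P - 1) Q = aeval (hA P) (Q.comp (X - C 1)) := by
  rw [gshift', map_one]

lemma aeval_add_one (Q : ℂ[X]) :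
    aeval (hA P + 1) Q = aeval (hA P) (Q.comp (X + C 1)) := by
  rw [gshift, map_one]

lemma trace_iff (T : AP P →ₗ[ℂ] ℂ) :
    (∀ a b : AP P, T (a * b) = T (b * a)) ↔
      ((∀ a : AP P,
          (∃ k : ℤ, k ≠ 0 ∧ hA P * a - a * hA P = (((2 * k : ℤ) : ℂ)) • a) → T a = 0) ∧
        ∀ S : ℂ[X],
          T (Polynomial.aeval (hA P - 1) (S * P)) =
            T (Polynomial.aeval (hA P + 1) (S * P))) := by
  constructor
  · intro hT
    constructor
    · rintro a ⟨k, hk, hrel⟩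
      have h2 : T (hA P * a - a * hA P) = 0 := by
        rw [map_sub, hT (hA P) a, sub_self]
      rw [hrel, map_smul, smul_eq_mul] at h2
      have hne : ((2 * k : ℤ) : ℂ) ≠ 0 := by
        simp only [ne_eq, Int.cast_eq_zero]
        omega
      exact (mul_eq_zero.mp h2).resolve_left hne
    · intro S
      have hA1 : aeval (hA P - 1) (S * P)
          = (aeval (hA P) (S.comp (X - C 1)) * eA P) * fA P := by
        rw [aeval_sub_one, Polynomial.mul_comp, map_mul, mul_assoc, rel_ef']
      have hA2 : aeval (hA P + 1) (S * P)
          = aeval (hA P) (S.comp (X + C 1)) * (fA P * eA P) := by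
        rw [aeval_add_one, Polynomial.mul_comp, map_mul, rel_fe']
      have hcomm : aeval (hA P) (S.comp (X - C 1)) * eA P
          = eA P * aeval (hA P) (S.comp (X + C 1)) := by
        rw [comm_e_comp]
        congr 2
        rw [Polynomial.comp_assoc]
        congr 1
        rw [Polynomial.sub_comp, Polynomial.X_comp, Polynomial.C_comp,
          show (C 2 : ℂ[X]) = C 1 + C 1 by rw [← Polynomial.C_add]; norm_num]
        ring
      calc T (aeval (hA P - 1) (S * P))
          = T ((eA P * aeval (hA P) (S.comp (X + C 1))) * fA P) := by rw [hA1, hcomm]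
        _ = T (eA P * (aeval (hA P) (S.comp (X + C 1)) * fA P)) := by rw [mul_assoc]
        _ = T ((aeval (hA P) (S.comp (X + C 1)) * fA P) * eA P) := hT _ _
        _ = T (aeval (hA P) (S.comp (X + C 1)) * (fA P * eA P)) := by rw [mul_assoc]
        _ = T (aeval (hA P + 1) (S * P)) := by rw [hA2]
  · rintro ⟨h1, h2⟩
    apply trace_of_conditions
    · intro i q hi
      exact h1 _ ⟨(i:ℤ), by exact_mod_cast hi, weight_e i q⟩
    · intro i q hi
      exact h1 _ ⟨-(i:ℤ), by simpa using hi, weight_f i q⟩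
    · intro S
      rw [← aeval_sub_one, ← aeval_add_one]
      exact h2 S

/-! ### Degree computations for the shift map -/

lemma shiftPoly_coeff (Q : ℂ[X]) (k : ℕ) :
    (Q.comp (X + 1) - Q.comp (X - 1)).coeff k
      = (Q.hasseDeriv k).eval 1 - (Q.hasseDeriv k).eval (-1) := by
  rw [Polynomial.coeff_sub]
  congr 1
  · rw [show (X + 1 : ℂ[X]) = X + C 1 by rw [Polynomial.C_1],
      ← Polynomial.taylor_apply, Polynomial.taylor_coeff]
  · rw [show (X - 1 : ℂ[X]) = X + C (-1) by rw [map_neg, Polynomial.C_1]; ring,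
      ← Polynomial.taylor_apply, Polynomial.taylor_coeff]

lemma shiftPoly_coeff_high (Q : ℂ[X]) (k : ℕ) (hk : Q.natDegree ≤ k) :
    (Q.comp (X + 1) - Q.comp (X - 1)).coeff k = 0 := by
  rw [shiftPoly_coeff]
  have h1 : (Q.hasseDeriv k).natDegree ≤ 0 :=
    le_trans (Polynomial.natDegree_hasseDeriv_le Q k) (by omega)
  rw [Polynomial.eq_C_of_natDegree_le_zero h1]
  simp

lemma shiftPoly_coeff_main (Q : ℂ[X]) (hQ : 1 ≤ Q.natDegree) :
    (Q.comp (X + 1) - Q.comp (X - 1)).coeff (Q.natDegree - 1)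
      = 2 * Q.natDegree * Q.leadingCoeff := by
  rw [shiftPoly_coeff]
  have h1 : (Q.hasseDeriv (Q.natDegree - 1)).natDegree ≤ 1 :=
    le_trans (Polynomial.natDegree_hasseDeriv_le Q (Q.natDegree - 1)) (by omega)
  rw [Polynomial.eq_X_add_C_of_natDegree_le_one h1]
  simp only [Polynomial.eval_add, Polynomial.eval_mul, Polynomial.eval_C, Polynomial.eval_X]
  rw [Polynomial.hasseDeriv_coeff]
  rw [show 1 + (Q.natDegree - 1) = Q.natDegree by omega]
  rw [show Q.natDegree.choose (Q.natDegree - 1) = Q.natDegree by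
    rw [← Nat.choose_symm (by omega), show Q.natDegree - (Q.natDegree - 1) = 1 by omega,
      Nat.choose_one_right]]
  rw [Polynomial.coeff_natDegree]
  ring

lemma shiftMap_apply (S : ℂ[X]) :
    shiftMap P S = (S * P).comp (X + 1) - (S * P).comp (X - 1) := rfl

lemma shiftMap_coeff_natDegree (hP1 : 1 ≤ P.natDegree) {S : ℂ[X]} (hS : S ≠ 0) :
    ((shiftMap P S).coeff (S.natDegree + P.natDegree - 1)
      = 2 * (S.natDegree + P.natDegree) * (S.leadingCoeff * P.leadingCoeff)) ∧
    (shiftMap P S).natDegree = S.natDegree + P.natDegree - 1 := by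
  have hP0 : P ≠ 0 := fun h => by simp [h] at hP1
  have hQ0 : S * P ≠ 0 := mul_ne_zero hS hP0
  have hdQ : (S * P).natDegree = S.natDegree + P.natDegree := Polynomial.natDegree_mul hS hP0
  have hQ1 : 1 ≤ (S * P).natDegree := by omega
  have hval : (shiftMap P S).coeff (S.natDegree + P.natDegree - 1)
      = 2 * (S.natDegree + P.natDegree) * (S.leadingCoeff * P.leadingCoeff) := by
    rw [shiftMap_apply, show S.natDegree + P.natDegree - 1 = (S*P).natDegree - 1 by omega,
      shiftPoly_coeff_main _ hQ1, hdQ, Polynomial.leadingCoeff_mul]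
    push_cast
    ring
  have hco : (shiftMap P S).coeff (S.natDegree + P.natDegree - 1) ≠ 0 := by
    rw [hval]
    have hlcS : S.leadingCoeff ≠ 0 := Polynomial.leadingCoeff_ne_zero.mpr hS
    have hlcP : P.leadingCoeff ≠ 0 := Polynomial.leadingCoeff_ne_zero.mpr hP0
    have hd0 : ((S.natDegree + P.natDegree : ℕ) : ℂ) ≠ 0 := by
      simp only [ne_eq, Nat.cast_eq_zero]
      omega
    push_cast at hd0 ⊢
    exact mul_ne_zero (mul_ne_zero two_ne_zero hd0) (mul_ne_zero hlcS hlcP)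
  refine ⟨hval, le_antisymm ?_ (Polynomial.le_natDegree_of_ne_zero hco)⟩
  rw [Polynomial.natDegree_le_iff_coeff_eq_zero]
  intro N hN
  rw [shiftMap_apply]
  exact shiftPoly_coeff_high _ _ (by omega)

lemma shiftMap_coeff_ne_zero (hP1 : 1 ≤ P.natDegree) {S : ℂ[X]} (hS : S ≠ 0) :
    (shiftMap P S).coeff (S.natDegree + P.natDegree - 1) ≠ 0 := by
  rw [(shiftMap_coeff_natDegree hP1 hS).1]
  have hP0 : P ≠ 0 := fun h => by simp [h] at hP1
  have hlcS : S.leadingCoeff ≠ 0 := Polynomial.leadingCoeff_ne_zero.mpr hS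
  have hlcP : P.leadingCoeff ≠ 0 := Polynomial.leadingCoeff_ne_zero.mpr hP0
  have hd0 : ((S.natDegree + P.natDegree : ℕ) : ℂ) ≠ 0 := by
    simp only [ne_eq, Nat.cast_eq_zero]
    omega
  push_cast at hd0 ⊢
  exact mul_ne_zero (mul_ne_zero two_ne_zero hd0) (mul_ne_zero hlcS hlcP)

lemma shiftMap_ne_zero (hP1 : 1 ≤ P.natDegree) {S : ℂ[X]} (hS : S ≠ 0) :
    shiftMap P S ≠ 0 := by
  intro h
  exact shiftMap_coeff_ne_zero hP1 hS (by rw [h]; simp)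

lemma disjoint_shift (hP1 : 1 ≤ P.natDegree) :
    Disjoint (LinearMap.range (shiftMap P)) (Polynomial.degreeLT ℂ (P.natDegree - 1)) := by
  rw [Submodule.disjoint_def]
  rintro x ⟨S, rfl⟩ hx2
  by_cases hS : S = 0
  · rw [hS, map_zero]
  exfalso
  have hne := shiftMap_ne_zero hP1 hS
  have hnd := (shiftMap_coeff_natDegree hP1 hS).2
  have hlt := Polynomial.mem_degreeLT.mp hx2
  rw [Polynomial.degree_eq_natDegree hne, Nat.cast_lt, hnd] at hlt
  omega

lemma sup_shift (hP1 : 1 ≤ P.natDegree) :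
    LinearMap.range (shiftMap P) ⊔ Polynomial.degreeLT ℂ (P.natDegree - 1) = ⊤ := by
  have hP0 : P ≠ 0 := fun h => by simp [h] at hP1
  have hlcP : P.leadingCoeff ≠ 0 := Polynomial.leadingCoeff_ne_zero.mpr hP0
  rw [eq_top_iff]
  rintro p -
  have main : ∀ d : ℕ, ∀ p : ℂ[X], p.natDegree ≤ d →
      p ∈ LinearMap.range (shiftMap P) ⊔ Polynomial.degreeLT ℂ (P.natDegree - 1) := by
    intro d
    induction d using Nat.strong_induction_on with
    | _ d ih =>
      intro p hpd
      by_cases hp0 : p = 0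
      · rw [hp0]; exact Submodule.zero_mem _
      by_cases hsmall : p.natDegree < P.natDegree - 1
      · refine Submodule.mem_sup_right (Polynomial.mem_degreeLT.mpr ?_)
        rw [Polynomial.degree_eq_natDegree hp0, Nat.cast_lt]
        exact hsmall
      push_neg at hsmall
      set c : ℂ := p.leadingCoeff / (2 * (p.natDegree + 1) * P.leadingCoeff) with hc
      have hden : (2 * ((p.natDegree : ℂ) + 1) * P.leadingCoeff) ≠ 0 := by
        refine mul_ne_zero (mul_ne_zero two_ne_zero ?_) hlcP
        have : ((p.natDegree : ℂ) + 1) = ((p.natDegree + 1 : ℕ) : ℂ) := by push_cast; ring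
        rw [this]
        simp only [ne_eq, Nat.cast_eq_zero]
        omega
      have hc0 : c ≠ 0 := div_ne_zero (Polynomial.leadingCoeff_ne_zero.mpr hp0) hden
      set S : ℂ[X] := C c * X ^ (p.natDegree - (P.natDegree - 1)) with hSdef
      have hS0 : S ≠ 0 := by
        refine mul_ne_zero ?_ (pow_ne_zero _ Polynomial.X_ne_zero)
        simpa using hc0
      have hSd : S.natDegree = p.natDegree - (P.natDegree - 1) :=
        Polynomial.natDegree_C_mul_X_pow _ _ hc0
      have hSlc : S.leadingCoeff = c := by
        rw [hSdef, Polynomial.leadingCoeff_C_mul_X_pow]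
      have hkey := shiftMap_coeff_natDegree hP1 hS0
      have hsum : S.natDegree + P.natDegree = p.natDegree + 1 := by
        rw [hSd]; omega
      have hdeg2 : (shiftMap P S).natDegree = p.natDegree := by
        rw [hkey.2, hsum]; omega
      have hco2 : (shiftMap P S).coeff p.natDegree = p.leadingCoeff := by
        have h0 := hkey.1
        rw [show S.natDegree + P.natDegree - 1 = p.natDegree by omega] at h0
        have hcast : ((S.natDegree : ℂ) + P.natDegree) = (p.natDegree : ℂ) + 1 := by
          have h1 := congrArg (fun m : ℕ => (m : ℂ)) hsum
          push_cast at h1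
          exact h1
        rw [h0, hcast, hSlc, hc]
        field_simp
      set q : ℂ[X] := p - shiftMap P S with hq
      have hql : q.coeff p.natDegree = 0 := by
        rw [hq, Polynomial.coeff_sub, hco2, Polynomial.coeff_natDegree, sub_self]
      have hq_le : q.natDegree ≤ p.natDegree := by
        refine le_trans (Polynomial.natDegree_sub_le _ _) ?_
        rw [hdeg2]
        simp
      have hp_eq : p = shiftMap P S + q := by rw [hq]; ring
      by_cases hq0 : q = 0
      · rw [hp_eq, hq0, add_zero]
        exact Submodule.mem_sup_left ⟨S, rfl⟩
      · have hqlt : q.natDegree < p.natDegree := by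
          rcases lt_or_eq_of_le hq_le with h | h
          · exact h
          · exfalso
            apply hq0
            rw [← Polynomial.leadingCoeff_eq_zero, Polynomial.leadingCoeff, h, hql]
        have hq_mem := ih q.natDegree (by omega) q le_rfl
        rw [hp_eq]
        exact Submodule.add_mem _ (Submodule.mem_sup_left ⟨S, rfl⟩) hq_mem
  exact main p.natDegree p le_rfl

lemma quot_finrank (hP1 : 1 ≤ P.natDegree) :
    Module.finrank ℂ (ℂ[X] ⧸ LinearMap.range (shiftMap P)) = P.natDegree - 1 := by
  have hcompl : IsCompl (LinearMap.range (shiftMap P))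
      (Polynomial.degreeLT ℂ (P.natDegree - 1)) :=
    ⟨disjoint_shift hP1, codisjoint_iff.mpr (sup_shift hP1)⟩
  rw [LinearEquiv.finrank_eq (Submodule.quotientEquivOfIsCompl _ _ hcompl),
    LinearEquiv.finrank_eq (Polynomial.degreeLTEquiv ℂ (P.natDegree - 1)),
    Module.finrank_fin_fun]

/-! ### The space of traces -/

def aevalLin (P : ℂ[X]) : ℂ[X] →ₗ[ℂ] AP P := (Polynomial.aeval (hA P)).toLinearMap

lemma trace_kills_shift {T : AP P →ₗ[ℂ] ℂ}
    (hT : ∀ a b : AP P, T (a * b) = T (b * a)) :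
    LinearMap.range (shiftMap P) ≤ LinearMap.ker (T ∘ₗ aevalLin P) := by
  rintro _ ⟨S, rfl⟩
  have h2 := ((trace_iff T).mp hT).2 S
  simp only [LinearMap.mem_ker, LinearMap.comp_apply]
  show T (aeval (hA P) (shiftMap P S)) = 0
  have e1 : aeval (hA P) ((S*P).comp (X + 1)) = aeval (hA P + 1) (S*P) := by
    rw [aeval_add_one, Polynomial.C_1]
  have e2 : aeval (hA P) ((S*P).comp (X - 1)) = aeval (hA P - 1) (S*P) := by
    rw [aeval_sub_one, Polynomial.C_1]
  rw [shiftMap_apply, map_sub, e1, e2, map_sub, h2, sub_self]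

def psiMap (P : ℂ[X]) :
    tracesSubmodule P →ₗ[ℂ] ((ℂ[X] ⧸ LinearMap.range (shiftMap P)) →ₗ[ℂ] ℂ) where
  toFun T := (LinearMap.range (shiftMap P)).liftQ
    ((T : AP P →ₗ[ℂ] ℂ) ∘ₗ aevalLin P) (trace_kills_shift T.2)
  map_add' T₁ T₂ := by
    apply Submodule.linearMap_qext
    apply LinearMap.ext
    intro S
    simp [Submodule.liftQ_apply]
  map_smul' c T := by
    apply Submodule.linearMap_qext
    apply LinearMap.ext
    intro S
    simp [Submodule.liftQ_apply]

lemma trace_eq_zero_of_vanish (T : AP P →ₗ[ℂ] ℂ)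
    (hT : ∀ a b : AP P, T (a * b) = T (b * a))
    (hz : ∀ S : ℂ[X], T (aeval (hA P) S) = 0) : T = 0 := by
  have h1 := ((trace_iff T).mp hT).1
  have key : ∀ a : AP P, T a = 0 := by
    intro a
    have ha : a ∈ Submodule.span ℂ (sSet P) := by rw [span_sSet_eq_top]; trivial
    induction ha using Submodule.span_induction with
    | mem m hm =>
      obtain ⟨i, q, rfl | rfl⟩ := hm
      · cases i with
        | zero => rw [pow_zero, one_mul]; exact hz q
        | succ i' =>
          refine h1 _ ⟨(i'+1 : ℕ), by positivity, ?_⟩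
          exact_mod_cast weight_e (i'+1) q
      · cases i with
        | zero => rw [pow_zero, one_mul]; exact hz q
        | succ i' =>
          refine h1 _ ⟨-((i'+1 : ℕ) : ℤ), by push_cast; omega, ?_⟩
          exact_mod_cast weight_f (i'+1) q
    | zero => exact map_zero T
    | add y z _ _ hy hz' => rw [map_add, hy, hz', add_zero]
    | smul c y _ hy => rw [map_smul, hy, smul_zero]
  exact LinearMap.ext fun a => key a

lemma psi_injective : Function.Injective (psiMap P) := by
  rw [← LinearMap.ker_eq_bot, eq_bot_iff]
  rintro T hT
  have hT0 : psiMap P T = 0 := hT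
  have hz : ∀ S : ℂ[X], (T : AP P →ₗ[ℂ] ℂ) (aeval (hA P) S) = 0 := by
    intro S
    have := congrArg (fun ψ : (ℂ[X] ⧸ LinearMap.range (shiftMap P)) →ₗ[ℂ] ℂ =>
      ψ ((LinearMap.range (shiftMap P)).mkQ S)) hT0
    simpa [psiMap, Submodule.liftQ_apply, aevalLin] using this
  have := trace_eq_zero_of_vanish (T : AP P →ₗ[ℂ] ℂ) T.2 hz
  simp only [Submodule.mem_bot]
  exact Subtype.ext this

lemma psi_surjective : Function.Surjective (psiMap P) := by
  intro ψ
  set φ : ℂ[X] →ₗ[ℂ] ℂ := ψ ∘ₗ (LinearMap.range (shiftMap P)).mkQ with hφdef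
  have hφ : ∀ S, φ (shiftMap P S) = 0 := by
    intro S
    simp only [hφdef, LinearMap.comp_apply, Submodule.mkQ_apply]
    rw [(Submodule.Quotient.mk_eq_zero _).mpr (LinearMap.mem_range_self _ S), map_zero]
  have hmem : Tphi P φ ∈ tracesSubmodule P := Tphi_trace φ hφ
  refine ⟨⟨Tphi P φ, hmem⟩, ?_⟩
  apply Submodule.linearMap_qext
  apply LinearMap.ext
  intro S
  simp only [LinearMap.comp_apply, Submodule.mkQ_apply, psiMap, LinearMap.coe_mk,
    AddHom.coe_mk, Submodule.liftQ_apply]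
  show Tphi P φ (aeval (hA P) S) = ψ (Submodule.Quotient.mk S)
  rw [Tphi_aeval, hφdef]
  rfl

lemma traces_finrank (hP1 : 1 ≤ P.natDegree) :
    Module.finrank ℂ (tracesSubmodule P) = P.natDegree - 1 := by
  rw [LinearEquiv.finrank_eq
    (LinearEquiv.ofBijective (psiMap P) ⟨psi_injective, psi_surjective⟩)]
  have hdual : Module.finrank ℂ ((ℂ[X] ⧸ LinearMap.range (shiftMap P)) →ₗ[ℂ] ℂ)
      = Module.finrank ℂ (ℂ[X] ⧸ LinearMap.range (shiftMap P)) :=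
    Subspace.dual_finrank_eq
  rw [hdual, quot_finrank hP1]

theorem stmt5 (P : ℂ[X]) (n : ℕ) (hn : 1 ≤ n) (hdeg : P.natDegree = n)
    (T : AP P →ₗ[ℂ] ℂ) :
    ((∀ a b : AP P, T (a * b) = T (b * a)) ↔
      ((∀ a : AP P,
          (∃ k : ℤ, k ≠ 0 ∧ hA P * a - a * hA P = (((2 * k : ℤ) : ℂ)) • a) → T a = 0) ∧
        ∀ S : ℂ[X],
          T (Polynomial.aeval (hA P - 1) (S * P)) =
            T (Polynomial.aeval (hA P + 1) (S * P)))) ∧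
    Module.finrank ℂ (tracesSubmodule P) = n - 1 ∧
    Module.finrank ℂ (ℂ[X] ⧸ LinearMap.range (shiftMap P)) = n - 1 := by
  have hP1 : 1 ≤ P.natDegree := by omega
  refine ⟨trace_iff T, ?_, ?_⟩
  · rw [traces_finrank hP1, hdeg]
  · rw [quot_finrank hP1, hdeg]

end
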